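/- Let f(x) = √(4 − x²) for x ∈ (−2, 2) (the unnormalized semicircle density). Then for every n ≥ 1, the even derivative f^{(2n)} has no zero in (−2,2), while the odd derivative f^{(2n−1)} vanishes exactly once in (−2,2), namely at x = 0. In particular the semicircle density is not bell-shaped. -/

import Mathlib

open MeasureTheory Set Filter Real

open Polynomial in
noncomputable def scQ : ℕ → Polynomial ℝ
  | 0 => 1
  | (k+1) => (C 4 - X^2) * derivative (scQ k) + C (2*(k:ℝ)-1) * X * scQ k

section scAux
open Polynomial

lemma scQ_coeff_zero (k : ℕ) :
    (scQ (k+1)).coeff 0 = 4 * (scQ k).coeff 1 := by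
  simp [scQ, coeff_derivative, mul_assoc, mul_comm]

lemma scQ_coeff_succ (k m : ℕ) :
    (scQ (k+1)).coeff (m+1) = 4 * (m+2) * (scQ k).coeff (m+2)
      + (2*(k:ℝ) - 1 - m) * (scQ k).coeff m := by
  have h1 : (X^2 * derivative (scQ k)).coeff (m+1) = (m:ℝ) * (scQ k).coeff m := by
    cases m with
    | zero =>
      rw [show (1:ℕ) = 0 + 1 from rfl, pow_two, mul_assoc, coeff_X_mul, mul_coeff_zero]
      simp
    | succ l =>
      have : l + 1 + 1 = l + 2 := rfl
      rw [this, coeff_X_pow_mul (derivative (scQ k)) 2 l, coeff_derivative]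
      push_cast; ring
  have h2 : (C (2*(k:ℝ)-1) * X * scQ k).coeff (m+1)
      = (2*(k:ℝ)-1) * (scQ k).coeff m := by
    rw [mul_assoc, coeff_C_mul, coeff_X_mul]
  simp only [scQ, coeff_add, sub_mul, coeff_sub, coeff_C_mul, h1, h2, coeff_derivative]
  push_cast; ring
def scInv (k : ℕ) : Prop :=
  (∀ j, (scQ k).coeff j ≤ 0) ∧ (∀ j, j % 2 ≠ k % 2 → (scQ k).coeff j = 0) ∧
    (scQ k).coeff (k % 2) < 0 ∧ (scQ k).natDegree ≤ k

lemma scQ_one : scQ 1 = -X := by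
  have : scQ 1 = (C 4 - X^2) * derivative (scQ 0) + C (2*((0:ℕ):ℝ)-1) * X * scQ 0 := rfl
  rw [this]
  simp [scQ]

lemma scInv_all : ∀ k, 1 ≤ k → scInv k := by
  intro k hk
  induction k with
  | zero => omega
  | succ k ih =>
    rcases Nat.eq_or_lt_of_le hk with h1 | h1
    · -- k + 1 = 1
      have hk0 : k = 0 := by omega
      subst hk0
      refine ⟨?_, ?_, ?_, ?_⟩
      · intro j
        rw [scQ_one]
        by_cases h : j = 1 <;> simp [coeff_X, eq_comm, h]
      · intro j hj
        rw [scQ_one]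
        have : ¬ (1 = j) := by omega
        simp [coeff_X, if_neg this]
      · rw [scQ_one]; norm_num
      · rw [scQ_one]; simp
    · have hk1 : 1 ≤ k := by omega
      obtain ⟨hle, hpar, hlow, hdeg⟩ := ih hk1
      have hnp : ∀ j, (scQ (k+1)).coeff j ≤ 0 := by
        intro j
        cases j with
        | zero =>
          rw [scQ_coeff_zero]
          nlinarith [hle 1]
        | succ m =>
          rw [scQ_coeff_succ]
          have t1 : 4 * ((m:ℝ)+2) * (scQ k).coeff (m+2) ≤ 0 := by
            have := hle (m+2); nlinarith
          have t2 : (2*(k:ℝ) - 1 - m) * (scQ k).coeff m ≤ 0 := by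
            by_cases hq : (scQ k).coeff m = 0
            · simp [hq]
            · have hm : m ≤ (scQ k).natDegree := le_natDegree_of_ne_zero hq
              have hmk : m ≤ k := le_trans hm hdeg
              have : (0:ℝ) ≤ 2*(k:ℝ) - 1 - m := by
                have : (m:ℝ) ≤ k := by exact_mod_cast hmk
                have : (1:ℝ) ≤ k := by exact_mod_cast hk1
                nlinarith [show (m:ℝ) ≤ k by exact_mod_cast hmk]
              nlinarith [hle m]
          linarith
      refine ⟨hnp, ?_, ?_, ?_⟩
      · intro j hj
        cases j with
        | zero =>
          rw [scQ_coeff_zero, hpar 1 (by omega), mul_zero]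
        | succ m =>
          rw [scQ_coeff_succ, hpar (m+2) (by omega), hpar m (by omega)]
          ring
      · rcases Nat.even_or_odd k with hke | hko
        · have hke' : k % 2 = 0 := Nat.even_iff.mp hke
          have h2 : (k+1) % 2 = 1 := by omega
          rw [h2, scQ_coeff_succ]
          have hq0 : (scQ k).coeff 0 < 0 := by rw [← hke']; exact hlow
          have hq2 : (scQ k).coeff (0+2) ≤ 0 := hle 2
          have hkpos : (1:ℝ) ≤ k := by exact_mod_cast hk1
          have hc : (2*(k:ℝ) - 1 - ((0:ℕ):ℝ)) * (scQ k).coeff 0 < 0 :=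
            mul_neg_of_pos_of_neg (by push_cast; linarith) hq0
          have hc2 : 4 * (((0:ℕ):ℝ)+2) * (scQ k).coeff (0+2) ≤ 0 := by nlinarith
          push_cast at hc hc2 ⊢
          linarith
        · have hko' : k % 2 = 1 := Nat.odd_iff.mp hko
          have h2 : (k+1) % 2 = 0 := by omega
          rw [h2, scQ_coeff_zero]
          have hq1 : (scQ k).coeff 1 < 0 := by rw [← hko']; exact hlow
          linarith
      · rw [natDegree_le_iff_coeff_eq_zero]
        intro m hm
        cases m with
        | zero => omega
        | succ m =>
          rw [scQ_coeff_succ]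
          have z1 : (scQ k).coeff (m+2) = 0 :=
            coeff_eq_zero_of_natDegree_lt (by omega)
          have z2 : (scQ k).coeff m = 0 :=
            coeff_eq_zero_of_natDegree_lt (by omega)
          rw [z1, z2]; ring
lemma scQ_eval_neg_of_even (k : ℕ) (hk : 1 ≤ k) (hke : k % 2 = 0) (x : ℝ) :
    (scQ k).eval x < 0 := by
  obtain ⟨hle, hpar, hlow, hdeg⟩ := scInv_all k hk
  rw [hke] at hlow
  rw [eval_eq_sum_range]
  have h0 : ∑ i ∈ Finset.range ((scQ k).natDegree + 1), (0:ℝ) = 0 := by simp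
  rw [← h0]
  apply Finset.sum_lt_sum
  · intro i _
    rcases Nat.even_or_odd i with hi | hi
    · exact mul_nonpos_of_nonpos_of_nonneg (hle i) (hi.pow_nonneg x)
    · have hi' : i % 2 = 1 := Nat.odd_iff.mp hi
      rw [hpar i (by omega), zero_mul]
  · exact ⟨0, Finset.mem_range.mpr (by omega), by simpa using hlow⟩

lemma scQ_eval_neg_of_odd (k : ℕ) (hko : k % 2 = 1) (x : ℝ) (hx : 0 < x) :
    (scQ k).eval x < 0 := by
  have hk : 1 ≤ k := by omega
  obtain ⟨hle, hpar, hlow, hdeg⟩ := scInv_all k hk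
  rw [hko] at hlow
  have hd1 : 1 ≤ (scQ k).natDegree := le_natDegree_of_ne_zero (ne_of_lt hlow)
  rw [eval_eq_sum_range]
  have h0 : ∑ i ∈ Finset.range ((scQ k).natDegree + 1), (0:ℝ) = 0 := by simp
  rw [← h0]
  apply Finset.sum_lt_sum
  · intro i _
    exact mul_nonpos_of_nonpos_of_nonneg (hle i) (le_of_lt (pow_pos hx i))
  · refine ⟨1, Finset.mem_range.mpr (by omega), ?_⟩
    have : (scQ k).coeff 1 * x ^ 1 < 0 := mul_neg_of_neg_of_pos hlow (by positivity)
    linarith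

lemma scQ_eval_neg_arg (k : ℕ) (hko : k % 2 = 1) (x : ℝ) :
    (scQ k).eval (-x) = - (scQ k).eval x := by
  have hk : 1 ≤ k := by omega
  obtain ⟨hle, hpar, hlow, hdeg⟩ := scInv_all k hk
  rw [eval_eq_sum_range, eval_eq_sum_range, ← Finset.sum_neg_distrib]
  apply Finset.sum_congr rfl
  intro i _
  rcases Nat.even_or_odd i with hi | hi
  · have hi' : i % 2 = 0 := Nat.even_iff.mp hi
    rw [hpar i (by omega), zero_mul, zero_mul, neg_zero]
  · rw [hi.neg_pow]; ring

lemma scQ_eval_zero (k : ℕ) (hko : k % 2 = 1) : (scQ k).eval 0 = 0 := by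
  have hk : 1 ≤ k := by omega
  obtain ⟨hle, hpar, hlow, hdeg⟩ := scInv_all k hk
  rw [← coeff_zero_eq_eval_zero]
  exact hpar 0 (by omega)
lemma scD : ∀ k : ℕ, ∀ x ∈ Set.Ioo (-2:ℝ) 2,
    iteratedDeriv k (fun y : ℝ => Real.sqrt (4 - y ^ 2)) x
      = (scQ k).eval x * (4 - x ^ 2) ^ ((1:ℝ)/2 - k) := by
  intro k
  induction k with
  | zero =>
    intro x hx
    have hu : (0:ℝ) < 4 - x ^ 2 := by
      obtain ⟨h1, h2⟩ := hx; nlinarith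
    simp [scQ, Real.sqrt_eq_rpow]
  | succ k ih =>
    intro x hx
    have hu : (0:ℝ) < 4 - x ^ 2 := by
      obtain ⟨h1, h2⟩ := hx; nlinarith
    have heq : iteratedDeriv k (fun y : ℝ => Real.sqrt (4 - y ^ 2))
        =ᶠ[nhds x] fun y => (scQ k).eval y * (4 - y ^ 2) ^ ((1:ℝ)/2 - k) := by
      filter_upwards [Ioo_mem_nhds hx.1 hx.2] with y hy using ih y hy
    have hu' : HasDerivAt (fun y : ℝ => 4 - y ^ 2) (-(2 * x)) x := by
      simpa [Pi.sub_def] using (hasDerivAt_const x (4:ℝ)).sub (hasDerivAt_pow 2 x)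
    have hr : HasDerivAt (fun y : ℝ => (4 - y ^ 2) ^ ((1:ℝ)/2 - k))
        (((1:ℝ)/2 - k) * (4 - x ^ 2) ^ ((1:ℝ)/2 - k - 1) * (-(2 * x))) x := by
      have := (Real.hasDerivAt_rpow_const (p := (1:ℝ)/2 - k)
        (Or.inl (ne_of_gt hu))).comp x hu'
      simpa [Function.comp_def, mul_comm, mul_assoc, mul_left_comm] using this
    have hp : HasDerivAt (fun y : ℝ => (scQ k).eval y)
        ((derivative (scQ k)).eval x) x := (scQ k).hasDerivAt x
    have htot : HasDerivAt (fun y => (scQ k).eval y * (4 - y ^ 2) ^ ((1:ℝ)/2 - k)) _ x := hp.mul hr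
    rw [iteratedDeriv_succ, heq.deriv_eq, htot.deriv]
    have heval : (scQ (k+1)).eval x
        = (4 - x ^ 2) * (derivative (scQ k)).eval x
          + (2*(k:ℝ) - 1) * x * (scQ k).eval x := by
      show ((C 4 - X^2) * derivative (scQ k) + C (2*(k:ℝ)-1) * X * scQ k).eval x = _
      simp [pow_two]
    rw [heval]
    have hsplit : (4 - x ^ 2) ^ ((1:ℝ)/2 - k)
        = (4 - x ^ 2) ^ ((1:ℝ)/2 - k - 1) * (4 - x ^ 2) := by
      have h := Real.rpow_add hu ((1:ℝ)/2 - (k:ℝ) - 1) 1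
      rw [Real.rpow_one] at h
      rw [← h]
      norm_num
    have hcast : (1:ℝ)/2 - ((k:ℕ)+1:ℕ) = (1:ℝ)/2 - k - 1 := by push_cast; ring
    rw [hcast, hsplit]
    ring

end scAux

/-- For the semicircle function `f(x) = √(4−x²)` on `(−2,2)` and every `n ≥ 1`,
the even derivative `f^{(2n)}` never vanishes on `(−2,2)` while the odd
derivative `f^{(2n−1)}` vanishes exactly at `x = 0`. -/
theorem semicircle_derivative_zeros (n : ℕ) (hn : 1 ≤ n) :
    (∀ x ∈ Set.Ioo (-2:ℝ) 2,
      iteratedDeriv (2 * n) (fun y : ℝ => Real.sqrt (4 - y ^ 2)) x ≠ 0) ∧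
    (∀ x ∈ Set.Ioo (-2:ℝ) 2,
      (iteratedDeriv (2 * n - 1) (fun y : ℝ => Real.sqrt (4 - y ^ 2)) x = 0 ↔
        x = 0)) := by
  constructor
  · intro x hx
    rw [scD (2*n) x hx]
    have hu : (0:ℝ) < 4 - x ^ 2 := by obtain ⟨h1, h2⟩ := hx; nlinarith
    have hpos := Real.rpow_pos_of_pos hu ((1:ℝ)/2 - ((2*n:ℕ):ℝ))
    have hneg := scQ_eval_neg_of_even (2*n) (by omega) (by omega) x
    exact mul_ne_zero (ne_of_lt hneg) (ne_of_gt hpos)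
  · intro x hx
    rw [scD (2*n-1) x hx]
    have hu : (0:ℝ) < 4 - x ^ 2 := by obtain ⟨h1, h2⟩ := hx; nlinarith
    have hpos := Real.rpow_pos_of_pos hu ((1:ℝ)/2 - ((2*n-1:ℕ):ℝ))
    have hko : (2*n-1) % 2 = 1 := by omega
    constructor
    · intro h
      have hz : (scQ (2*n-1)).eval x = 0 := by
        rcases mul_eq_zero.mp h with h' | h'
        · exact h'
        · exact absurd h' (ne_of_gt hpos)
      by_contra hx0
      rcases lt_or_gt_of_ne hx0 with hxn | hxp
      · have hy : (0:ℝ) < -x := by linarith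
        have h2 := scQ_eval_neg_of_odd _ hko (-x) hy
        rw [scQ_eval_neg_arg _ hko] at h2
        linarith
      · have h2 := scQ_eval_neg_of_odd _ hko x hxp
        linarith
    · intro h
      subst h
      rw [scQ_eval_zero _ hko, zero_mul]
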